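/- Suppose the potential-outcomes model holds: (Ω, 𝒜, ℙ) is a probability space, 𝒵 and 𝒳 are nonempty finite types, Z : Ω → 𝒵 is measurable (𝒵 discrete), XP : 𝒵 → Ω → 𝒳 gives the measurable potential treatments, YP : 𝒳 → Ω → Y gives the measurable potential outcomes into a measurable space Y, and the random element ω ↦ ((XP z ω)_{z∈𝒵}, (YP x ω)_{x∈𝒳}) is independent of Z (instrument independence). Suppose there is a measure μ on Y and measurable sub-densities φ : 𝒵 → 𝒳 → Y → ℝ≥0 such that for every z ∈ 𝒵 with ℙ(Z = z) > 0, every x ∈ 𝒳 and every measurable B ⊆ Y, the conditional probability ℙ[{ω | XP (Z ω) ω = x and YP x ω ∈ B} | Z = z] equals ∫_B φ z x dμ. Then for every x ∈ 𝒳, every nonempty subset Z̃ ⊆ 𝒵 with ℙ(Z = z) > 0 for all z ∈ Z̃, and every measurable B ⊆ Y: ℙ {ω | YP x ω ∈ B and XP z ω = x for all z ∈ Z̃} ≤ ∫_B (fun y => min over z ∈ Z̃ of φ z x y) dμ. -/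

import Mathlib

open MeasureTheory ProbabilityTheory
open scoped ENNReal NNReal

lemma key_density
    {Ω : Type*} [MeasurableSpace Ω] (P : Measure Ω) [IsProbabilityMeasure P]
    {𝒵 : Type*} [Fintype 𝒵] [Nonempty 𝒵] [MeasurableSpace 𝒵] [MeasurableSingletonClass 𝒵]
    {𝒳 : Type*} [Fintype 𝒳] [Nonempty 𝒳] [MeasurableSpace 𝒳] [MeasurableSingletonClass 𝒳]
    {Y : Type*} [MeasurableSpace Y] (μ : Measure Y)
    (Z : Ω → 𝒵) (hZ : Measurable Z)
    (XP : 𝒵 → Ω → 𝒳)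
    (YP : 𝒳 → Ω → Y)
    (hindep : IndepFun (fun ω => ((fun z => XP z ω), (fun x => YP x ω))) Z P)
    (φ : 𝒵 → 𝒳 → Y → NNReal)
    (hdens : ∀ z : 𝒵, 0 < P (Z ⁻¹' {z}) → ∀ x : 𝒳, ∀ B : Set Y, MeasurableSet B →
      (ProbabilityTheory.cond P (Z ⁻¹' {z})) {ω | XP (Z ω) ω = x ∧ YP x ω ∈ B} = ∫⁻ y in B, (φ z x y : ℝ≥0∞) ∂μ)
    (z : 𝒵) (hz : 0 < P (Z ⁻¹' {z})) (x : 𝒳) (B : Set Y) (hB : MeasurableSet B) :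
    P {ω | XP z ω = x ∧ YP x ω ∈ B} = ∫⁻ y in B, (φ z x y : ℝ≥0∞) ∂μ := by
  set W : Ω → (𝒵 → 𝒳) × (𝒳 → Y) := fun ω => ((fun z => XP z ω), (fun x => YP x ω)) with hW
  set S : Set ((𝒵 → 𝒳) × (𝒳 → Y)) := {p | p.1 z = x ∧ p.2 x ∈ B} with hSdef
  have hS : MeasurableSet S := by
    have h1 : Measurable fun p : (𝒵 → 𝒳) × (𝒳 → Y) => p.1 z :=
      (measurable_pi_apply z).comp measurable_fst
    have h2 : Measurable fun p : (𝒵 → 𝒳) × (𝒳 → Y) => p.2 x :=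
      (measurable_pi_apply x).comp measurable_snd
    exact (h1 (measurableSet_singleton x)).inter (h2 hB)
  have hA : {ω | XP z ω = x ∧ YP x ω ∈ B} = W ⁻¹' S := rfl
  have hmul := hindep.measure_inter_preimage_eq_mul _ _ hS (measurableSet_singleton z)
  have hs : MeasurableSet (Z ⁻¹' {z}) := hZ (measurableSet_singleton z)
  have hcond := hdens z hz x B hB
  rw [cond_apply hs] at hcond
  have hset : Z ⁻¹' {z} ∩ {ω | XP (Z ω) ω = x ∧ YP x ω ∈ B}
      = W ⁻¹' S ∩ Z ⁻¹' {z} := by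
    ext ω
    simp only [Set.mem_inter_iff, Set.mem_preimage, Set.mem_singleton_iff, Set.mem_setOf_eq,
      hSdef, hW]
    constructor
    · rintro ⟨hzω, h1, h2⟩; exact ⟨⟨hzω ▸ h1, h2⟩, hzω⟩
    · rintro ⟨⟨h1, h2⟩, hzω⟩; exact ⟨hzω, hzω.symm ▸ h1, h2⟩
  rw [hset, hmul] at hcond
  have h0 : P (Z ⁻¹' {z}) ≠ 0 := hz.ne'
  have ht : P (Z ⁻¹' {z}) ≠ ⊤ := measure_ne_top P _
  rw [hA]
  calc P (W ⁻¹' S) = (P (Z ⁻¹' {z}))⁻¹ * (P (W ⁻¹' S) * P (Z ⁻¹' {z})) := by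
        rw [mul_comm (P (W ⁻¹' S)), ← mul_assoc, ENNReal.inv_mul_cancel h0 ht, one_mul]
    _ = ∫⁻ y in B, (φ z x y : ℝ≥0∞) ∂μ := hcond

theorem sufficient_takers_bound
    {Ω : Type*} [MeasurableSpace Ω] (P : Measure Ω) [IsProbabilityMeasure P]
    {𝒵 : Type*} [Fintype 𝒵] [Nonempty 𝒵] [MeasurableSpace 𝒵] [MeasurableSingletonClass 𝒵]
    {𝒳 : Type*} [Fintype 𝒳] [Nonempty 𝒳] [MeasurableSpace 𝒳] [MeasurableSingletonClass 𝒳]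
    {Y : Type*} [MeasurableSpace Y] (μ : Measure Y)
    (Z : Ω → 𝒵) (hZ : Measurable Z)
    (XP : 𝒵 → Ω → 𝒳) (hXP : ∀ z, Measurable (XP z))
    (YP : 𝒳 → Ω → Y) (hYP : ∀ x, Measurable (YP x))
    (hindep : IndepFun (fun ω => ((fun z => XP z ω), (fun x => YP x ω))) Z P)
    (φ : 𝒵 → 𝒳 → Y → NNReal) (hφ : ∀ z x, Measurable (φ z x))
    (hdens : ∀ z : 𝒵, 0 < P (Z ⁻¹' {z}) → ∀ x : 𝒳, ∀ B : Set Y, MeasurableSet B →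
      (ProbabilityTheory.cond P (Z ⁻¹' {z})) {ω | XP (Z ω) ω = x ∧ YP x ω ∈ B} = ∫⁻ y in B, (φ z x y : ℝ≥0∞) ∂μ) :
    ∀ (x : 𝒳) (Zt : Finset 𝒵), Zt.Nonempty → (∀ z ∈ Zt, 0 < P (Z ⁻¹' {z})) →
      ∀ B : Set Y, MeasurableSet B →
        P {ω | YP x ω ∈ B ∧ ∀ z ∈ Zt, XP z ω = x} ≤
          ∫⁻ y in B, (⨅ z ∈ Zt, (φ z x y : ℝ≥0∞)) ∂μ := by
  classical
  intro x Zt hZt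
  induction hZt using Finset.Nonempty.cons_induction with
  | singleton a =>
    intro hpos B hB
    have ha := hpos a (Finset.mem_singleton_self a)
    have key := key_density P μ Z hZ XP YP hindep φ hdens a ha x B hB
    have hset : {ω | YP x ω ∈ B ∧ ∀ z ∈ ({a} : Finset 𝒵), XP z ω = x}
        = {ω | XP a ω = x ∧ YP x ω ∈ B} := by
      ext ω; simp only [Set.mem_setOf_eq, Finset.mem_singleton, forall_eq, and_comm]
    rw [hset, key]
    refine le_of_eq (lintegral_congr fun y => ?_)
    simp [Finset.iInf_singleton]
  | cons a s h hs IH =>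
    intro hpos B hB
    have ha : 0 < P (Z ⁻¹' {a}) := hpos a (Finset.mem_cons_self a s)
    have hpos' : ∀ z ∈ s, 0 < P (Z ⁻¹' {z}) := fun z hz => hpos z (Finset.mem_cons_of_mem hz)
    set g : Y → ℝ≥0∞ := fun y => ⨅ z ∈ s, (φ z x y : ℝ≥0∞) with hgdef
    have hφa : Measurable fun y => (φ a x y : ℝ≥0∞) := (hφ a x).coe_nnreal_ennreal
    have hg : Measurable g := by
      apply Measurable.iInf
      intro z
      apply Measurable.iInf
      intro _
      exact (hφ z x).coe_nnreal_ennreal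
    set C : Set Y := {y | (φ a x y : ℝ≥0∞) ≤ g y} with hCdef
    have hC : MeasurableSet C := measurableSet_le hφa hg
    -- pointwise description of the infimum over cons
    have hinf : ∀ y, (⨅ z ∈ Finset.cons a s h, (φ z x y : ℝ≥0∞))
        = (φ a x y : ℝ≥0∞) ⊓ g y := by
      intro y
      rw [Finset.cons_eq_insert, Finset.iInf_insert]
    -- split the event
    have hsplit : {ω | YP x ω ∈ B ∧ ∀ z ∈ Finset.cons a s h, XP z ω = x} ⊆
        {ω | XP a ω = x ∧ YP x ω ∈ B ∩ C} ∪
        {ω | YP x ω ∈ B \ C ∧ ∀ z ∈ s, XP z ω = x} := by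
      intro ω hω
      obtain ⟨hYB, hall⟩ := hω
      have hXa : XP a ω = x := hall a (Finset.mem_cons_self a s)
      have hXs : ∀ z ∈ s, XP z ω = x := fun z hz => hall z (Finset.mem_cons_of_mem hz)
      by_cases hy : YP x ω ∈ C
      · exact Or.inl ⟨hXa, hYB, hy⟩
      · exact Or.inr ⟨⟨hYB, hy⟩, hXs⟩
    calc P {ω | YP x ω ∈ B ∧ ∀ z ∈ Finset.cons a s h, XP z ω = x}
        ≤ P ({ω | XP a ω = x ∧ YP x ω ∈ B ∩ C} ∪
            {ω | YP x ω ∈ B \ C ∧ ∀ z ∈ s, XP z ω = x}) := measure_mono hsplit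
      _ ≤ P {ω | XP a ω = x ∧ YP x ω ∈ B ∩ C} +
          P {ω | YP x ω ∈ B \ C ∧ ∀ z ∈ s, XP z ω = x} := measure_union_le _ _
      _ ≤ (∫⁻ y in B ∩ C, (φ a x y : ℝ≥0∞) ∂μ) +
          ∫⁻ y in B \ C, g y ∂μ := by
          exact add_le_add
            (le_of_eq (key_density P μ Z hZ XP YP hindep φ hdens a ha x (B ∩ C)
              (hB.inter hC)))
            (IH hpos' (B \ C) (hB.diff hC))
      _ = (∫⁻ y in B ∩ C, (⨅ z ∈ Finset.cons a s h, (φ z x y : ℝ≥0∞)) ∂μ) +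
          ∫⁻ y in B \ C, (⨅ z ∈ Finset.cons a s h, (φ z x y : ℝ≥0∞)) ∂μ := by
          congr 1
          · refine setLIntegral_congr_fun (hB.inter hC) (fun y hy => ?_)
            rw [hinf y, inf_eq_left.mpr hy.2]
          · refine setLIntegral_congr_fun (hB.diff hC) (fun y hy => ?_)
            have : g y ≤ (φ a x y : ℝ≥0∞) := le_of_lt (lt_of_not_ge hy.2)
            rw [hinf y, inf_eq_right.mpr this]
      _ = ∫⁻ y in B, (⨅ z ∈ Finset.cons a s h, (φ z x y : ℝ≥0∞)) ∂μ :=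
          lintegral_inter_add_diff _ B hC
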